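/- Let (b₀,b₁,…) be a sequence of integers with |b_i| ≥ 2 for i = 1, …, n−1 and b_n = 0, and let 1 ≤ k < n. Then the convergents v_{k−1} and v_n of [b₀,b₁,…] are real numbers (not ∞) and satisfy |v_n − v_{k−1}| ≤ 1/(|b_k| − 1). -/

import Mathlib

open Filter Topology OnePoint

/-- The Möbius map `z ↦ b - 1/z` on the one-point compactification `ℝ∞` of `ℝ`. -/
noncomputable def mob (b : ℤ) (z : OnePoint ℝ) : OnePoint ℝ :=
  Option.elim z ((b : ℝ) : OnePoint ℝ)
    (fun x => if x = 0 then (∞ : OnePoint ℝ) else (((b : ℝ) - 1 / x : ℝ) : OnePoint ℝ))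

/-- Value of a finite continued fraction `[b₀, …, b_m]`, i.e. `s₀(s₁(⋯ s_m(∞)))`. -/
noncomputable def cfVal : List ℤ → OnePoint ℝ
  | [] => ∞
  | b :: t => mob b (cfVal t)

/-- The `n`th convergent `v_n = S_n(∞)` of the continued fraction `[b₀, b₁, …]`. -/
noncomputable def cfConv (b : ℕ → ℤ) (n : ℕ) : OnePoint ℝ :=
  cfVal ((List.range (n + 1)).map b)

/-- `m` is a positive index at which the coefficient is `0`, `1` or `-1`. -/
def badIdx (b : ℕ → ℤ) (m : ℕ) : Prop :=
  1 ≤ m ∧ (b m = 0 ∨ b m = 1 ∨ b m = -1)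

instance (b : ℕ → ℤ) : DecidablePred (badIdx b) := fun m => by
  unfold badIdx; infer_instance

-- The singularization map `Φ` on integer sequences.
open Classical in
noncomputable def Phi (b : ℕ → ℤ) : ℕ → ℤ :=
  if h : ∃ m, badIdx b m then
    let m := Nat.find h
    if b m = 0 then
      fun k => if k + 1 < m then b k
        else if k = m - 1 then b (m - 1) + b (m + 1)
        else b (k + 2)
    else if b m = 1 then
      fun k => if k + 1 < m then b k
        else if k = m - 1 then b (m - 1) - 1
        else if k = m then b (m + 1) - 1
        else b (k + 1)
    else
      fun k => if k + 1 < m then b k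
        else if k = m - 1 then b (m - 1) + 1
        else if k = m then b (m + 1) + 1
        else b (k + 1)
  else b

-- `p(b) ∈ ℕ ∪ {∞}`: the least positive index at which `0`, `1` or `-1` occurs.
open Classical in
noncomputable def pIdx (b : ℕ → ℤ) : ℕ∞ :=
  if h : ∃ m, badIdx b m then (Nat.find h : ℕ∞) else ⊤

/-- `p⁽ⁿ⁾ → ∞` as `n → ∞`. -/
def PTendsToTop (b : ℕ → ℤ) : Prop :=
  ∀ N : ℕ, ∃ M : ℕ, ∀ n ≥ M, (N : ℕ∞) < pIdx (Phi^[n] b)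

/-- `p = liminf pⁿ`, as a natural number (junk value if the liminf is `∞`). -/
noncomputable def pLim (b : ℕ → ℤ) : ℕ :=
  (Filter.liminf (fun n => pIdx (Phi^[n] b)) Filter.atTop).toNat

/-- `q⁽ⁿ⁾ = |b⁽ⁿ⁾_{p-1}|`. -/
noncomputable def qSeq (b : ℕ → ℤ) (n : ℕ) : ℕ :=
  ((Phi^[n] b) (pLim b - 1)).natAbs

/-- Two continued fractions have the same tail. -/
def SameTail (b c : ℕ → ℤ) : Prop := ∃ r s : ℕ, ∀ k : ℕ, b (r + k) = c (s + k)

/-- `bstar` is the limit continued fraction: each coefficient of `Φⁿ(b)` stabilises on it. -/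
def EventuallyCoeff (b bstar : ℕ → ℤ) : Prop :=
  ∀ k : ℕ, ∃ N : ℕ, ∀ n ≥ N, Phi^[n] b k = bstar k

/-- The point of `ℝ∞` represented by the integer fraction `a/b` (`∞` when `b = 0`). -/
noncomputable def intPt (a b : ℤ) : OnePoint ℝ :=
  if b = 0 then ∞ else (((a : ℝ) / (b : ℝ)) : OnePoint ℝ)

/-- Adjacency in the Farey graph: `x = a/b`, `y = c/d` with `ad - bc = ±1`. -/
def FareyAdj (x y : OnePoint ℝ) : Prop :=
  ∃ a b c d : ℤ, x = intPt a b ∧ y = intPt c d ∧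
    (a * d - b * c = 1 ∨ a * d - b * c = -1)

/-- `x` is an extended rational, i.e. a member of `ℚ∞ = ℚ ∪ {∞} ⊆ ℝ∞`. -/
def IsExtRat (x : OnePoint ℝ) : Prop :=
  x = ∞ ∨ ∃ q : ℚ, x = ((q : ℝ) : OnePoint ℝ)

-- One step of the index-tracking sequence, for the current coefficient sequence `c`.
open Classical in
noncomputable def eStep (c : ℕ → ℤ) (e : ℕ) : Option ℕ :=
  if h : ∃ m, badIdx c m then
    let m := Nat.find h
    if c m = 0 then
      if e + 2 ≤ m then Option.some e
      else if e = m - 1 ∨ e = m then (none : Option ℕ)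
      else Option.some (e - 2)
    else
      if e + 2 ≤ m then Option.some e
      else if e = m - 1 then (none : Option ℕ)
      else Option.some (e - 1)
  else Option.some e

/-- The index-tracking sequence `e⁽⁰⁾(k), e⁽¹⁾(k), …` (`none` once it has terminated). -/
noncomputable def eSeq (b : ℕ → ℤ) (k : ℕ) : ℕ → Option ℕ
  | 0 => Option.some k
  | n + 1 => (eSeq b k n).bind (eStep (Phi^[n] b))

/-- **Lemma 8, second part.** If `|bᵢ| ≥ 2` for `i = 1, …, n-1`, `b_n = 0` and
`1 ≤ k < n`, then the convergents `v_n` and `v_{k-1}` are real and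
`|v_n - v_{k-1}| ≤ 1/(|b_k| - 1)`. -/

lemma mob_infty (b : ℤ) : mob b ∞ = ((b:ℝ) : OnePoint ℝ) := rfl
lemma mob_coe (b : ℤ) (x : ℝ) :
    mob b ((x:ℝ) : OnePoint ℝ) = if x = 0 then (∞ : OnePoint ℝ) else (((b:ℝ) - 1/x : ℝ) : OnePoint ℝ) := rfl

noncomputable def act (p q r s : ℤ) (z : OnePoint ℝ) : OnePoint ℝ :=
  Option.elim z (if (r:ℝ) = 0 then (∞ : OnePoint ℝ) else (((p:ℝ)/(r:ℝ) : ℝ) : OnePoint ℝ))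
    (fun x => if (r:ℝ)*x + (s:ℝ) = 0 then (∞ : OnePoint ℝ)
      else ((((p:ℝ)*x + (q:ℝ))/((r:ℝ)*x + (s:ℝ)) : ℝ) : OnePoint ℝ))

lemma act_infty (p q r s : ℤ) :
    act p q r s ∞ = if (r:ℝ) = 0 then (∞ : OnePoint ℝ) else (((p:ℝ)/(r:ℝ) : ℝ) : OnePoint ℝ) := rfl
lemma act_coe (p q r s : ℤ) (x : ℝ) :
    act p q r s ((x:ℝ) : OnePoint ℝ) = if (r:ℝ)*x + (s:ℝ) = 0 then (∞ : OnePoint ℝ)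
      else ((((p:ℝ)*x + (q:ℝ))/((r:ℝ)*x + (s:ℝ)) : ℝ) : OnePoint ℝ) := rfl

lemma mob_act (b p q r s : ℤ) (hdet : p*s - q*r = 1) (z : OnePoint ℝ) :
    mob b (act p q r s z) = act (b*p - r) (b*q - s) p q z := by
  have hdetR : (p:ℝ)*(s:ℝ) - (q:ℝ)*(r:ℝ) = 1 := by exact_mod_cast hdet
  induction z using OnePoint.rec with
  | infty =>
    rw [act_infty, act_infty]
    by_cases hr : (r:ℝ) = 0
    · have hp : (p:ℝ) ≠ 0 := by intro h; rw [h, hr] at hdetR; simp at hdetR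
      simp [hr, hp, mob_infty]
    · simp only [hr, if_false, mob_coe]
      by_cases hp : (p:ℝ) = 0
      · have : (p:ℝ)/(r:ℝ) = 0 := by rw [hp]; simp
        simp [this, hp]
      · have h1 : (p:ℝ)/(r:ℝ) ≠ 0 := div_ne_zero hp hr
        simp only [h1, if_false, hp, if_neg hp, mob_coe]
        congr 1
        field_simp
        push_cast; ring
  | coe x =>
    rw [act_coe, act_coe]
    by_cases hd : (r:ℝ)*x + (s:ℝ) = 0
    · have hn : (p:ℝ)*x + (q:ℝ) ≠ 0 := by
        intro h
        have : (p:ℝ)*(s:ℝ) - (q:ℝ)*(r:ℝ) = 0 := by linear_combination (p:ℝ)*hd - (r:ℝ)*h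
        rw [this] at hdetR; norm_num at hdetR
      simp only [hd, if_true, if_neg hn, mob_infty]
      congr 1
      have hs : (s:ℝ) = -((r:ℝ)*x) := by linarith
      rw [eq_div_iff hn]; push_cast
      linear_combination hd
    · simp only [hd, if_false, mob_coe]
      by_cases hn : ((p:ℝ)*x + (q:ℝ))/((r:ℝ)*x + (s:ℝ)) = 0
      · have hpq : (p:ℝ)*x + (q:ℝ) = 0 := by
          rcases div_eq_zero_iff.mp hn with h | h
          · exact h
          · exact absurd h hd
        simp [hn, hpq]
      · have hpq : (p:ℝ)*x + (q:ℝ) ≠ 0 := by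
          intro h; apply hn; rw [h]; simp
        simp only [hn, if_false, if_neg hpq]
        congr 1
        field_simp
        push_cast; ring

def contL : List ℤ → ℤ × ℤ × ℤ × ℤ
  | [] => (1, 0, 0, 1)
  | b :: t =>
    (b * (contL t).1 - (contL t).2.2.1, b * (contL t).2.1 - (contL t).2.2.2,
      (contL t).1, (contL t).2.1)

lemma contL_det : ∀ l : List ℤ,
    (contL l).1 * (contL l).2.2.2 - (contL l).2.1 * (contL l).2.2.1 = 1
  | [] => by simp [contL]
  | b :: t => by
    have ih := contL_det t
    simp only [contL]
    ring_nf
    ring_nf at ih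
    linarith

lemma foldr_mob_eq_act : ∀ (l : List ℤ) (z : OnePoint ℝ),
    List.foldr mob z l = act (contL l).1 (contL l).2.1 (contL l).2.2.1 (contL l).2.2.2 z
  | [], z => by
    induction z using OnePoint.rec with
    | infty => simp [contL, act_infty]
    | coe x => simp [contL, act_coe]
  | b :: t, z => by
    have ih := foldr_mob_eq_act t z
    simp only [List.foldr_cons, ih, contL]
    exact mob_act b _ _ _ _ (contL_det t) z

lemma contL_concat : ∀ (l : List ℤ) (b : ℤ),
    contL (l ++ [b]) = ((contL l).1 * b + (contL l).2.1, -(contL l).1,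
      (contL l).2.2.1 * b + (contL l).2.2.2, -(contL l).2.2.1)
  | [], b => by simp [contL]
  | c :: t, b => by
    simp only [List.cons_append, contL, List.append_eq]
    rw [contL_concat t b]
    refine Prod.ext ?_ (Prod.ext ?_ (Prod.ext ?_ ?_)) <;> simp <;> ring

lemma front_bound : ∀ (l : List ℤ), (∀ x ∈ l, 2 ≤ |x|) → ∀ b0 : ℤ,
    |(contL (b0 :: l)).2.2.2| + 1 ≤ |(contL (b0 :: l)).2.2.1| := by
  intro l
  induction l using List.reverseRecOn with
  | nil => intro _ b0; simp [contL]
  | append_singleton t b ih =>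
    intro hmem b0
    have hb : 2 ≤ |b| := hmem b (by simp)
    have iht := ih (fun x hx => hmem x (by simp [hx])) b0
    have hcc := contL_concat (b0 :: t) b
    have heq : (b0 : ℤ) :: (t ++ [b]) = (b0 :: t) ++ [b] := by simp
    rw [heq, hcc]
    set r := (contL (b0 :: t)).2.2.1 with hr
    set s := (contL (b0 :: t)).2.2.2 with hs
    simp only
    have h1 : |r * b| - |s| ≤ |r * b + s| := by
      have := abs_sub_abs_le_abs_sub (r*b) (-s)
      simpa [sub_neg_eq_add] using this
    have h2 : |r * b| = |r| * |b| := abs_mul r b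
    have : |s| + 1 ≤ |r| := iht
    have : |r| * 2 ≤ |r| * |b| := by
      apply mul_le_mul_of_nonneg_left hb (abs_nonneg r)
    rw [abs_neg]
    nlinarith [abs_nonneg r, abs_nonneg s]

lemma cfVal_append : ∀ (l m : List ℤ), cfVal (l ++ m) = List.foldr mob (cfVal m) l
  | [], m => by simp
  | b :: t, m => by simp [cfVal, cfVal_append t m]

lemma cfVal_eq_foldr : ∀ l : List ℤ, cfVal l = List.foldr mob ∞ l
  | [] => rfl
  | b :: t => by simp [cfVal, cfVal_eq_foldr t]

lemma tail_bound : ∀ (l : List ℤ) (c : ℤ), (∀ x ∈ l, 2 ≤ |x|) → 2 ≤ |c| →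
    cfVal (c :: (l ++ [0])) = ∞ ∨
    ∃ t : ℝ, cfVal (c :: (l ++ [0])) = ((t : ℝ) : OnePoint ℝ) ∧ 1 ≤ |t| ∧ (|c| : ℝ) - 1 ≤ |t|
  | [], c, _, hc => by
    left
    show mob c (cfVal [0]) = ∞
    have h0 : cfVal [0] = ((0:ℝ) : OnePoint ℝ) := by
      show mob 0 ∞ = _
      rw [mob_infty]; norm_num
    rw [h0, mob_coe]; simp
  | d :: l', c, h, hc => by
    have hd : 2 ≤ |d| := h d (by simp)
    have ih := tail_bound l' d (fun x hx => h x (by simp [hx])) hd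
    have hstep : cfVal (c :: ((d :: l') ++ [0])) = mob c (cfVal (d :: (l' ++ [0]))) := by
      simp [cfVal]
    rcases ih with hinf | ⟨t, ht, h1, h2⟩
    · right
      refine ⟨(c : ℝ), ?_, ?_, ?_⟩
      · rw [hstep, hinf, mob_infty]
      · rw [← Int.cast_abs]; exact_mod_cast le_trans (by norm_num) hc
      · norm_num
    · right
      have ht0 : t ≠ 0 := by intro h0; rw [h0] at h1; norm_num at h1
      refine ⟨(c : ℝ) - 1 / t, ?_, ?_, ?_⟩
      · rw [hstep, ht, mob_coe, if_neg ht0]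
      · have hcr : (2:ℝ) ≤ |(c:ℝ)| := by rw [← Int.cast_abs]; exact_mod_cast hc
        have hinv : |1 / t| ≤ 1 := by
          rw [abs_div, abs_one]
          rw [div_le_one (by linarith)]
          linarith
        have := abs_sub_abs_le_abs_sub ((c:ℝ)) (1/t)
        have habs : |(c:ℝ)| - |1/t| ≤ |(c:ℝ) - 1/t| := this
        linarith
      · have hcr : (2:ℝ) ≤ |(c:ℝ)| := by rw [← Int.cast_abs]; exact_mod_cast hc
        have hinv : |1 / t| ≤ 1 := by
          rw [abs_div, abs_one]
          rw [div_le_one (by linarith)]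
          linarith
        have habs : |(c:ℝ)| - |1/t| ≤ |(c:ℝ) - 1/t| := abs_sub_abs_le_abs_sub _ _
        linarith

theorem stmt17 (b : ℕ → ℤ) (n k : ℕ) (hb : ∀ i : ℕ, 1 ≤ i → i < n → 2 ≤ |b i|)
    (hbn : b n = 0) (hk : 1 ≤ k) (hkn : k < n) :
    ∃ x y : ℝ, cfConv b n = ((x : OnePoint ℝ)) ∧ cfConv b (k - 1) = ((y : OnePoint ℝ)) ∧
      |x - y| ≤ 1 / ((|b k| : ℝ) - 1) := by
  set L : List ℤ := (List.range k).map b with hLdef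
  set m : ℕ := n - k - 1 with hmdef
  set Ml : List ℤ := (List.range (m+2)).map (fun j => b (k + j)) with hMdef
  have hkm : k + (m + 2) = n + 1 := by omega
  have hsplit : (List.range (n+1)).map b = L ++ Ml := by
    rw [← hkm, List.range_add, List.map_append, List.map_map]
    rfl
  have hMl : Ml = b k :: (((List.range m).map (fun j => b (k + (j+1)))) ++ [0]) := by
    rw [hMdef, List.range_succ_eq_map, List.range_succ, List.map_cons, List.map_map,
      List.map_append]
    congr 1
    · congr 1
      simp only [List.map_cons, List.map_nil]
      congr 1
      rw [show ((fun j => b (k+j)) ∘ Nat.succ) m = b (k + (m+1)) from rfl,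
        show k + (m+1) = n by omega, hbn]
  have hint : ∀ x ∈ (List.range m).map (fun j => b (k + (j+1))), 2 ≤ |x| := by
    intro x hx
    simp only [List.mem_map, List.mem_range] at hx
    obtain ⟨j, hj, rfl⟩ := hx
    exact hb _ (by omega) (by omega)
  have hbk : 2 ≤ |b k| := hb k hk hkn
  have htail := tail_bound _ _ hint hbk
  rw [← hMl] at htail
  have hL : L = b 0 :: (List.range (k-1)).map (fun j => b (j+1)) := by
    rw [hLdef, show k = (k-1)+1 by omega, List.range_succ_eq_map, List.map_cons, List.map_map]
    rfl
  have hfrontmem : ∀ x ∈ (List.range (k-1)).map (fun j => b (j+1)), 2 ≤ |x| := by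
    intro x hx
    simp only [List.mem_map, List.mem_range] at hx
    obtain ⟨j, hj, rfl⟩ := hx
    exact hb _ (by omega) (by omega)
  have hfront := front_bound _ hfrontmem (b 0)
  rw [← hL] at hfront
  have hdet := contL_det L
  set p := (contL L).1 with hp
  set q := (contL L).2.1 with hq
  set r := (contL L).2.2.1 with hr
  set s := (contL L).2.2.2 with hs
  have hr1 : (1:ℤ) ≤ |r| := by have := abs_nonneg s; omega
  have hrne : (r:ℝ) ≠ 0 := by
    simp only [ne_eq, Int.cast_eq_zero]
    intro h; rw [h] at hr1; simp at hr1
  have hrR : (1:ℝ) ≤ |(r:ℝ)| := by rw [← Int.cast_abs]; exact_mod_cast hr1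
  have hsR : |(s:ℝ)| ≤ |(r:ℝ)| - 1 := by
    have h2 : |(s:ℝ)| + 1 ≤ |(r:ℝ)| := by exact_mod_cast hfront
    linarith
  have hconvk : cfConv b (k-1) = act p q r s ∞ := by
    rw [cfConv, show k - 1 + 1 = k by omega, ← hLdef, cfVal_eq_foldr, foldr_mob_eq_act]
  have hy : cfConv b (k-1) = (((p:ℝ)/(r:ℝ) : ℝ) : OnePoint ℝ) := by
    rw [hconvk, act_infty, if_neg hrne]
  have hconvn : cfConv b n = act p q r s (cfVal Ml) := by
    rw [cfConv, hsplit, cfVal_append, foldr_mob_eq_act]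
  have hbkR : (2:ℝ) ≤ |(b k : ℝ)| := by rw [← Int.cast_abs]; exact_mod_cast hbk
  have hBpos : (0:ℝ) < |(b k : ℝ)| - 1 := by linarith
  rcases htail with hinf | ⟨t, ht, ht1, htk⟩
  · refine ⟨(p:ℝ)/(r:ℝ), (p:ℝ)/(r:ℝ), ?_, hy, ?_⟩
    · rw [hconvn, hinf, act_infty, if_neg hrne]
    · rw [sub_self, abs_zero]
      positivity
  · have hDabs : |(r:ℝ)| * |t| - |(s:ℝ)| ≤ |(r:ℝ)*t + (s:ℝ)| := by
      have := abs_sub_abs_le_abs_sub ((r:ℝ)*t) (-(s:ℝ))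
      simpa [abs_mul, sub_neg_eq_add] using this
    have hRT : |(r:ℝ)| * 1 ≤ |(r:ℝ)| * |t| := mul_le_mul_of_nonneg_left ht1 (abs_nonneg _)
    have hDpos : (0:ℝ) < |(r:ℝ)*t + (s:ℝ)| := by linarith
    have hDne : (r:ℝ)*t + (s:ℝ) ≠ 0 := by
      intro h; rw [h] at hDpos; simp at hDpos
    refine ⟨((p:ℝ)*t + (q:ℝ))/((r:ℝ)*t + (s:ℝ)), (p:ℝ)/(r:ℝ), ?_, hy, ?_⟩
    · rw [hconvn, ht, act_coe, if_neg hDne]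
    · have hdetR : (p:ℝ)*(s:ℝ) - (q:ℝ)*(r:ℝ) = 1 := by exact_mod_cast hdet
      have hdiff : ((p:ℝ)*t + (q:ℝ))/((r:ℝ)*t + (s:ℝ)) - (p:ℝ)/(r:ℝ)
          = -1/((r:ℝ)*((r:ℝ)*t + (s:ℝ))) := by
        have hnum : ((p:ℝ)*t + (q:ℝ)) * (r:ℝ) - ((r:ℝ)*t + (s:ℝ)) * (p:ℝ) = -1 := by
          linear_combination -hdetR
        rw [div_sub_div _ _ hDne hrne, hnum, mul_comm ((r:ℝ)*t + (s:ℝ)) (r:ℝ)]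
      rw [hdiff, abs_div, abs_neg, abs_one, abs_mul]
      have hle : |(b k:ℝ)| - 1 ≤ |(r:ℝ)| * |(r:ℝ)*t + (s:ℝ)| := by
        nlinarith [mul_le_mul_of_nonneg_left hDabs (le_trans zero_le_one hrR),
          abs_nonneg ((r:ℝ)*t + (s:ℝ)), sq_nonneg (|(r:ℝ)| - 1)]
      exact one_div_le_one_div_of_le hBpos hle
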